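/- Suppose that for every m ∈ {1,…,M} and every g ∈ {1,…,G}: u'_{g,m} = (F_{g,m} − F_{g,m−1})/h_m + γ_{g,m}·(B'_{g,m}·T'_m − u'_{g,m}) + (if m = m₀ then δF_g/h_m else 0), and that for every m: cv_m·T'_m = − Σ_{g=1}^{G} γ_{g,m}·(B'_{g,m}·T'_m − u'_{g,m}). Then Σ_{m=1}^{M} h_m·(cv_m·T'_m + Σ_{g=1}^{G} u'_{g,m}) = Σ_{g=1}^{G} (F_{g,M} − F_{g,0} + δF_g). -/

import Mathlib

lemma tele_aux (f : ℕ → ℝ) (M : ℕ) :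
    ∑ m ∈ Finset.Icc 1 M, (f m - f (m - 1)) = f M - f 0 := by
  induction M with
  | zero => simp
  | succ n ih =>
    rw [Finset.sum_Icc_succ_top (by omega), ih]
    simp


/-- Energy-conservation identity for the multigroup AMR sync-solve correction
system: the flux mismatch deposited in cell `m₀` is exactly accounted for in
the total corrected energy. -/
theorem stmt_16
    (M G : ℕ) (hM : 1 ≤ M) (hG : 1 ≤ G)
    (m₀ : ℕ) (hm₀ : m₀ ∈ Finset.Icc 1 M)
    (h : ℕ → ℝ) (hh : ∀ m ∈ Finset.Icc 1 M, 0 < h m)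
    (F γ B' u' : Fin G → ℕ → ℝ)
    (cv T' : ℕ → ℝ) (δF : Fin G → ℝ)
    (heq1 : ∀ m ∈ Finset.Icc 1 M, ∀ g : Fin G,
      u' g m = (F g m - F g (m - 1)) / h m
        + γ g m * (B' g m * T' m - u' g m)
        + (if m = m₀ then δF g / h m else 0))
    (heq2 : ∀ m ∈ Finset.Icc 1 M,
      cv m * T' m = - ∑ g, γ g m * (B' g m * T' m - u' g m)) :
    ∑ m ∈ Finset.Icc 1 M, h m * (cv m * T' m + ∑ g, u' g m)
      = ∑ g, (F g M - F g 0 + δF g) := by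
  have key : ∀ m ∈ Finset.Icc 1 M,
      h m * (cv m * T' m + ∑ g, u' g m)
        = (∑ g, (F g m - F g (m - 1))) + (if m = m₀ then ∑ g, δF g else 0) := by
    intro m hm
    have hne : h m ≠ 0 := (hh m hm).ne'
    have hsum : ∑ g, u' g m
        = (∑ g, (F g m - F g (m - 1))) / h m
          + (∑ g, γ g m * (B' g m * T' m - u' g m))
          + (if m = m₀ then (∑ g, δF g) / h m else 0) := by
      rw [Finset.sum_div, Finset.sum_div]
      rw [show (if m = m₀ then (∑ g, δF g / h m) else 0)
            = ∑ g : Fin G, (if m = m₀ then δF g / h m else 0) by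
          split <;> simp]
      rw [← Finset.sum_add_distrib, ← Finset.sum_add_distrib]
      exact Finset.sum_congr rfl fun g _ => heq1 m hm g
    rw [heq2 m hm, hsum]
    generalize ∑ g, γ g m * (B' g m * T' m - u' g m) = S
    split <;> field_simp <;> ring
  rw [Finset.sum_congr rfl key, Finset.sum_add_distrib,
    Finset.sum_comm, Finset.sum_ite_eq' _ m₀, if_pos hm₀]
  rw [← Finset.sum_add_distrib]
  exact Finset.sum_congr rfl fun g _ => by rw [tele_aux (F g) M]
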